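/- As n → ∞ through integers with n ≡ 0 or 3 (mod 4), the middle coefficient S(n) of the expansion of (1+x)(1+x²)···(1+x^n) satisfies S(n) ~ √(6/π) · 2^n · n^{-3/2}, i.e., the ratio S(n)/(√(6/π)·2^n n^{-3/2}) tends to 1. -/

import Mathlib

open Real Finset Filter intervalIntegral

noncomputable def fp (n : ℕ) (θ : ℝ) : ℝ := ∏ k ∈ Finset.Icc 1 n, Real.cos (k * θ / 2)

noncomputable def prodc (n : ℕ) (α : ℝ) : ℝ := ∏ k ∈ Finset.Icc 1 n, Real.cos (k * α)

lemma fp_eq_prodc (n : ℕ) (θ : ℝ) : fp n θ = prodc n (θ/2) := by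
  unfold fp prodc
  exact Finset.prod_congr rfl fun k _ => by rw [mul_div_assoc]

lemma fp_cont (n : ℕ) : Continuous (fp n) := by
  unfold fp
  exact continuous_finset_prod _ fun k _ => (Real.continuous_cos.comp (by continuity))

lemma cos_upper {x : ℝ} (hx : |x| ≤ 1) : Real.cos x ≤ 1 - x^2/2 + |x|^4 * (5/96) := by
  have := abs_le.1 (Real.cos_bound hx)
  linarith [this.2]

lemma cos_le_exp_aux {x : ℝ} (h0 : 0 ≤ x) (hx : x ≤ 1) : Real.cos x ≤ Real.exp (-(x^2/4)) := by
  have hax : |x| = x := abs_of_nonneg h0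
  have h1 : Real.cos x ≤ 1 - x^2/2 + x^4 * (5/96) := by
    have := cos_upper (by rw [hax]; exact hx); rwa [hax] at this
  have hx2 : x^2 ≤ 1 := by nlinarith
  have h2 : x^4 * (5/96) ≤ x^2/4 := by nlinarith [sq_nonneg x]
  have h4 : 1 - x^2/4 ≤ Real.exp (-(x^2/4)) := by
    have := Real.add_one_le_exp (-(x^2/4)); linarith
  linarith

lemma cos_nonneg_of_le_one {x : ℝ} (h0 : 0 ≤ x) (hx : x ≤ 1) : 0 ≤ Real.cos x := by
  apply Real.cos_nonneg_of_mem_Icc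
  constructor
  · linarith [Real.pi_gt_three]
  · linarith [Real.pi_gt_three]

-- T1 : if n*α ≤ 1, 0 ≤ α then prodc n α ≤ exp(-α² * (∑ k²)/4), and prodc ≥ 0

lemma cos_le_exp' {x : ℝ} (h0 : 0 ≤ x) (hx : x ≤ 1) :
    Real.cos x ≤ Real.exp (-(x^2/2) + x^4) := by
  have hax : |x| = x := abs_of_nonneg h0
  have h1 : Real.cos x ≤ 1 - x^2/2 + x^4 * (5/96) := by
    have := cos_upper (by rw [hax]; exact hx); rwa [hax] at this
  have h4 : 1 - x^2/2 + x^4 * (5/96) ≤ Real.exp (-(x^2/2) + x^4) := by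
    have := Real.add_one_le_exp (-(x^2/2) + x^4)
    nlinarith [pow_nonneg h0 4]
  linarith

lemma exp_le_cos {x : ℝ} (h0 : 0 ≤ x) (hx : x ≤ 1/2) :
    Real.exp (-(x^2/2) - x^4) ≤ Real.cos x := by
  have hcos : 1 - x^2/2 ≤ Real.cos x := Real.one_sub_sq_div_two_le_cos
  set y : ℝ := x^2/2 + x^4 with hy
  have hy0 : 0 ≤ y := by positivity
  have e0 : -(x^2/2) - x^4 = -y := by rw [hy]; ring
  rw [e0]
  have h1y : (0:ℝ) < 1 + y := by linarith
  have e1 : Real.exp (-y) ≤ 1/(1+y) := by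
    rw [Real.exp_neg, one_div]
    have := Real.add_one_le_exp y
    exact inv_anti₀ h1y (by linarith)
  have e2 : 1/(1+y) ≤ 1 - y + y^2 := by
    rw [div_le_iff₀ h1y]; nlinarith
  have hx2 : x^2 ≤ 1/4 := by nlinarith
  have hx4 : x^4 ≤ x^2/4 := by nlinarith [sq_nonneg x]
  have hyb : y ≤ (3/4)*x^2 := by rw [hy]; linarith
  have e3 : y^2 ≤ x^4 := by
    have h1 : y * y ≤ (3/4*x^2) * (3/4*x^2) :=
      mul_le_mul hyb hyb hy0 (by positivity)
    have h3 : (9:ℝ)/16 * x^4 ≤ x^4 := by nlinarith [pow_nonneg h0 4]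
    calc y^2 = y * y := sq y
      _ ≤ (3/4*x^2) * (3/4*x^2) := h1
      _ = 9/16*x^4 := by ring
      _ ≤ x^4 := h3
  have : 1 - y + y^2 ≤ 1 - x^2/2 := by
    have : x^2/2 + x^4 ≤ y := le_of_eq hy.symm
    nlinarith [e3]
  linarith

lemma sum_Icc_sq_real (n : ℕ) : ∑ k ∈ Finset.Icc 1 n, (k:ℝ)^2 = n*(n+1)*(2*n+1)/6 := by
  induction n with
  | zero => simp
  | succ m ih =>
    rw [Finset.sum_Icc_succ_top (by omega), ih]
    push_cast; ring

lemma sum_sq_lb (n : ℕ) : (n:ℝ)^3/3 ≤ ∑ k ∈ Finset.Icc 1 n, (k:ℝ)^2 := by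
  rw [sum_Icc_sq_real]
  have : (0:ℝ) ≤ n := by positivity
  nlinarith

lemma abs_prodc_le_one (n : ℕ) (α : ℝ) : |prodc n α| ≤ 1 := by
  unfold prodc
  rw [Finset.abs_prod]
  apply Finset.prod_le_one
  · intro k _; positivity
  · intro k _; exact Real.abs_cos_le_one _

-- product over pairs: Icc 1 (2m)

lemma prodc_nonneg {n : ℕ} {α : ℝ} (h0 : 0 ≤ α) (h1 : n*α ≤ 1) : 0 ≤ prodc n α := by
  unfold prodc
  apply Finset.prod_nonneg
  intro k hk
  simp only [Finset.mem_Icc] at hk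
  have : (k:ℝ)*α ≤ n*α := by
    apply mul_le_mul_of_nonneg_right _ h0
    exact_mod_cast hk.2
  exact cos_nonneg_of_le_one (by positivity) (by linarith)

lemma prodc_le_gauss {n : ℕ} {α : ℝ} (h0 : 0 ≤ α) (h1 : n*α ≤ 1) :
    prodc n α ≤ Real.exp (-(α^2 * (∑ k ∈ Finset.Icc 1 n, (k:ℝ)^2) / 4)) := by
  unfold prodc
  have key : ∀ k ∈ Finset.Icc 1 n, Real.cos ((k:ℝ)*α) ≤ Real.exp (-(((k:ℝ)*α)^2/4)) := by
    intro k hk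
    simp only [Finset.mem_Icc] at hk
    have hkn : (k:ℝ)*α ≤ n*α := by
      apply mul_le_mul_of_nonneg_right _ h0
      exact_mod_cast hk.2
    exact cos_le_exp_aux (by positivity) (by linarith)
  calc ∏ k ∈ Finset.Icc 1 n, Real.cos ((k:ℝ)*α)
      ≤ ∏ k ∈ Finset.Icc 1 n, Real.exp (-(((k:ℝ)*α)^2/4)) := by
        apply Finset.prod_le_prod
        · intro k hk
          simp only [Finset.mem_Icc] at hk
          have : (k:ℝ)*α ≤ n*α := by
            apply mul_le_mul_of_nonneg_right _ h0
            exact_mod_cast hk.2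
          exact cos_nonneg_of_le_one (by positivity) (by linarith)
        · exact key
    _ = Real.exp (∑ k ∈ Finset.Icc 1 n, -(((k:ℝ)*α)^2/4)) := (Real.exp_sum _ _).symm
    _ = Real.exp (-(α^2 * (∑ k ∈ Finset.Icc 1 n, (k:ℝ)^2) / 4)) := by
        congr 1
        calc ∑ k ∈ Finset.Icc 1 n, -(((k:ℝ)*α)^2/4)
            = ∑ k ∈ Finset.Icc 1 n, (k:ℝ)^2 * (-(α^2/4)) :=
              Finset.sum_congr rfl (fun k _ => by ring)
          _ = (∑ k ∈ Finset.Icc 1 n, (k:ℝ)^2) * (-(α^2/4)) := (Finset.sum_mul ..).symm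
          _ = -(α^2 * (∑ k ∈ Finset.Icc 1 n, (k:ℝ)^2) / 4) := by ring

-- pair bound

lemma pair_bound {a α : ℝ} (h0 : 0 ≤ α) (h1 : α ≤ π/2) :
    |Real.cos a * Real.cos (a + α)| ≤ Real.exp (-(α^2/8)) := by
  have e1 := Real.cos_add a (a+α)
  have e2 := Real.cos_sub (a+α) a
  have key : Real.cos a * Real.cos (a+α) = (Real.cos α + Real.cos (a + (a+α)))/2 := by
    have h3 : (a+α) - a = α := by ring
    rw [h3] at e2
    linarith
  rw [key]
  have hc1 : Real.cos α ≥ 0 := Real.cos_nonneg_of_mem_Icc ⟨by linarith, h1⟩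
  have habs : |(Real.cos α + Real.cos (a + (a+α)))/2| ≤ (Real.cos α + 1)/2 := by
    rw [abs_div]
    rw [abs_of_nonneg (by norm_num : (0:ℝ) ≤ 2)]
    apply div_le_div_of_nonneg_right ?_ (by norm_num)
    have b1 := Real.cos_le_one (a + (a+α))
    have b2 := Real.neg_one_le_cos (a + (a+α))
    rw [abs_le]
    constructor <;> nlinarith
  refine habs.trans ?_
  have hsq : (Real.cos α + 1)/2 = Real.cos (α/2)^2 := by
    rw [Real.cos_sq (α/2), show 2*(α/2) = α by ring]; ring
  rw [hsq]
  have hhalf0 : (0:ℝ) ≤ α/2 := by linarith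
  have hhalf1 : α/2 ≤ 1 := by linarith [Real.pi_le_four]
  have hc := cos_le_exp_aux hhalf0 hhalf1
  calc Real.cos (α/2)^2 ≤ (Real.exp (-((α/2)^2/4)))^2 :=
        pow_le_pow_left₀ (cos_nonneg_of_le_one hhalf0 hhalf1) hc 2
    _ = Real.exp (-(α^2/8)) := by
        rw [← Real.exp_nat_mul]
        congr 1
        ring

lemma prod_pairs (m : ℕ) {α : ℝ} (h0 : 0 ≤ α) (h1 : α ≤ π/2) :
    |prodc (2*m) α| ≤ Real.exp (-(m*α^2/8)) := by
  induction m with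
  | zero => simp [prodc]
  | succ j ih =>
    have e : 2*(j+1) = (2*j+1)+1 := by ring
    have split : prodc (2*(j+1)) α
        = prodc (2*j) α * (Real.cos (((2*j+1):ℕ)*α) * Real.cos (((2*j+2):ℕ)*α)) := by
      unfold prodc
      rw [show 2*(j+1) = (2*j+1)+1 by ring, Finset.prod_Icc_succ_top (by omega),
        Finset.prod_Icc_succ_top (by omega), mul_assoc, show 2*j+1+1 = 2*j+2 by ring]
    rw [split, abs_mul]
    have hpair : |Real.cos (((2*j+1):ℕ)*α) * Real.cos (((2*j+2):ℕ)*α)| ≤ Real.exp (-(α^2/8)) := by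
      have : ((2*j+2:ℕ):ℝ)*α = ((2*j+1:ℕ):ℝ)*α + α := by push_cast; ring
      rw [this]
      exact pair_bound h0 h1
    calc |prodc (2*j) α| * |Real.cos (((2*j+1):ℕ)*α) * Real.cos (((2*j+2):ℕ)*α)|
        ≤ Real.exp (-(j*α^2/8)) * Real.exp (-(α^2/8)) :=
          mul_le_mul ih hpair (abs_nonneg _) (Real.exp_nonneg _)
      _ = Real.exp (-(((j:ℝ)+1)*α^2/8)) := by rw [← Real.exp_add]; congr 1; ring
      _ = Real.exp (-(((j+1:ℕ):ℝ)*α^2/8)) := by push_cast; ring_nf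

-- general n

lemma prodc_pair_bound (n : ℕ) {α : ℝ} (h0 : 0 ≤ α) (h1 : α ≤ π/2) :
    |prodc n α| ≤ Real.exp (-((n/2 : ℕ)*α^2/8)) := by
  rcases Nat.even_or_odd n with ⟨m, hm⟩ | ⟨m, hm⟩
  · have : n = 2*m := by omega
    subst this
    have : (2*m/2 : ℕ) = m := by omega
    rw [this]
    exact prod_pairs m h0 h1
  · have hn : n = 2*m+1 := by omega
    subst hn
    have : ((2*m+1)/2 : ℕ) = m := by omega
    rw [this]
    have split : prodc (2*m+1) α = prodc (2*m) α * Real.cos (((2*m+1):ℕ)*α) := by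
      unfold prodc
      rw [Finset.prod_Icc_succ_top (by omega)]
    rw [split, abs_mul]
    calc |prodc (2*m) α| * |Real.cos (((2*m+1):ℕ)*α)|
        ≤ Real.exp (-(m*α^2/8)) * 1 :=
          mul_le_mul (prod_pairs m h0 h1) (Real.abs_cos_le_one _) (abs_nonneg _) (Real.exp_nonneg _)
      _ = Real.exp (-(m*α^2/8)) := mul_one _

lemma prodc_initial {n : ℕ} {α : ℝ} (hn : 2 ≤ n) (hl : 1/(n:ℝ) ≤ α) (hu : α ≤ 1/2) :
    |prodc n α| ≤ Real.exp (-(1/(96*α))) := by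
  have hn0 : (0:ℝ) < n := by positivity
  have hα0 : 0 < α := lt_of_lt_of_le (by positivity) hl
  set K := Nat.floor (1/α) with hK
  have hinv2 : (2:ℝ) ≤ 1/α := by
    rw [le_div_iff₀ hα0]; linarith
  have hK2 : 2 ≤ K := Nat.le_floor (by exact_mod_cast hinv2)
  have hinvn : 1/α ≤ (n:ℝ) := by
    rw [div_le_iff₀ hα0]
    calc (1:ℝ) = (n:ℝ) * (1/(n:ℝ)) := by field_simp
      _ ≤ (n:ℝ) * α := by apply mul_le_mul_of_nonneg_left hl (le_of_lt hn0)
  have hKn : K ≤ n := by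
    have h := Nat.floor_le_floor hinvn
    rwa [Nat.floor_natCast] at h
  have hKα : (K:ℝ) * α ≤ 1 := by
    have := Nat.floor_le (by positivity : (0:ℝ) ≤ 1/α)
    calc (K:ℝ) * α ≤ (1/α) * α := mul_le_mul_of_nonneg_right this (le_of_lt hα0)
      _ = 1 := by field_simp
  have hKlb : 1/(2*α) ≤ (K:ℝ) := by
    have h1 := Nat.sub_one_lt_floor (1/α)
    have : 1/α - 1 < (K:ℝ) := by exact_mod_cast h1
    have : 1/(2*α) ≤ 1/α - 1 := by
      rw [show 1/(2*α) = (1/α)/2 by ring]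
      linarith
    linarith
  -- split product
  have hsplit : prodc n α = prodc K α * ∏ k ∈ Finset.Ioc K n, Real.cos ((k:ℝ)*α) := by
    unfold prodc
    have e : ∀ m:ℕ, Finset.Icc 1 m = Finset.Ioc 0 m := fun m => by
      rw [← Finset.Icc_add_one_left_eq_Ioc, zero_add]
    rw [e, e]
    exact (Finset.prod_Ioc_consecutive (fun k => Real.cos ((k:ℝ)*α)) (Nat.zero_le K) hKn).symm
  rw [hsplit, abs_mul]
  have h2 : |∏ k ∈ Finset.Ioc K n, Real.cos ((k:ℝ)*α)| ≤ 1 := by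
    rw [Finset.abs_prod]
    apply Finset.prod_le_one
    · intro k _; positivity
    · intro k _; exact Real.abs_cos_le_one _
  have h1 : |prodc K α| ≤ Real.exp (-(1/(96*α))) := by
    have hg := prodc_le_gauss (le_of_lt hα0) hKα
    have hnn := prodc_nonneg (le_of_lt hα0) hKα
    rw [abs_of_nonneg hnn]
    refine hg.trans ?_
    apply Real.exp_le_exp.2
    rw [neg_le_neg_iff]
    -- 1/(96α) ≤ α² ∑k²/4
    have hsum : (K:ℝ)^3/3 ≤ ∑ k ∈ Finset.Icc 1 K, (k:ℝ)^2 := by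
      rw [sum_Icc_sq_real]
      have : (0:ℝ) ≤ K := by positivity
      nlinarith
    have hK3 : (1/(2*α))^3 ≤ (K:ℝ)^3 := by
      apply pow_le_pow_left₀ (by positivity) hKlb
    have key : 1/(96*α) ≤ α^2 * ((K:ℝ)^3/3) / 4 := by
      have e : α^2 * ((1/(2*α))^3/3)/4 = 1/(96*α) := by field_simp; ring
      rw [← e]
      apply div_le_div_of_nonneg_right _ (by norm_num)
      apply mul_le_mul_of_nonneg_left _ (sq_nonneg α)
      apply div_le_div_of_nonneg_right hK3 (by norm_num)
    refine key.trans ?_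
    apply div_le_div_of_nonneg_right _ (by norm_num)
    apply mul_le_mul_of_nonneg_left hsum (sq_nonneg α)
  calc |prodc K α| * |∏ k ∈ Finset.Ioc K n, Real.cos ((k:ℝ)*α)|
      ≤ Real.exp (-(1/(96*α))) * 1 :=
        mul_le_mul h1 h2 (abs_nonneg _) (Real.exp_nonneg _)
    _ = _ := mul_one _

lemma far_bound {n : ℕ} (hn : 8 ≤ n) {α : ℝ} (hl : 1/(n:ℝ) ≤ α) (hu : α ≤ π/2) :
    |prodc n α| ≤ Real.exp (-((n:ℝ)^((1:ℝ)/3)/67)) := by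
  have hn0 : (0:ℝ) < n := by positivity
  have hα0 : 0 < α := lt_of_lt_of_le (by positivity) hl
  set u := (n:ℝ)^((1:ℝ)/3) with hu3
  have hu0 : 0 < u := by positivity
  have hucube : u^3 = n := by
    rw [hu3, ← Real.rpow_natCast ((n:ℝ)^((1:ℝ)/3)) 3, ← Real.rpow_mul (le_of_lt hn0)]
    norm_num
  have hu2 : 2 ≤ u := by
    by_contra h
    push_neg at h
    have : u^3 < 2^3 := by
      apply pow_lt_pow_left₀ h (le_of_lt hu0)
      norm_num
    rw [hucube] at this
    have : (n:ℝ) < 8 := by norm_num at this; linarith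
    have : n < 8 := by exact_mod_cast this
    omega
  have hm : (n:ℝ)/4 ≤ ((n/2 : ℕ):ℝ) := by
    have h4 : n ≤ 4*(n/2) := by omega
    have : (n:ℝ) ≤ 4*((n/2:ℕ):ℝ) := by exact_mod_cast h4
    linarith
  by_cases hc : α ≤ 1/2
  · by_cases hc2 : u/67 ≤ 1/(96*α)
    · refine (prodc_initial (by omega) hl hc).trans ?_
      apply Real.exp_le_exp.2
      linarith
    · push_neg at hc2
      refine (prodc_pair_bound n (le_of_lt hα0) hu).trans ?_
      apply Real.exp_le_exp.2
      rw [neg_le_neg_iff]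
      -- need u/67 ≤ (n/2)*α²/8
      have hαlb : 67/(96*u) < α := by
        rw [div_lt_iff₀ (by positivity)]
        rw [div_lt_iff₀ (by positivity)] at hc2
        nlinarith
      have h1 : (n:ℝ)*α^2/32 ≤ ((n/2:ℕ):ℝ)*α^2/8 := by
        have := mul_le_mul_of_nonneg_right hm (sq_nonneg α)
        linarith
      have h2 : u/67 ≤ (n:ℝ)*α^2/32 := by
        have hα2 : (67/(96*u))^2 ≤ α^2 := by
          apply pow_le_pow_left₀ (by positivity) (le_of_lt hαlb)
        have e : (n:ℝ)*(67/(96*u))^2/32 = u^3*4489/(294912*u^2) := by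
          rw [← hucube]; field_simp; ring
        have e2 : u^3*4489/(294912*u^2) = u*4489/294912 := by
          field_simp
        have h3 : u/67 ≤ u*4489/294912 := by
          rw [div_le_div_iff₀ (by norm_num) (by norm_num)]
          nlinarith
        calc u/67 ≤ u*4489/294912 := h3
          _ = (n:ℝ)*(67/(96*u))^2/32 := by rw [e, e2]
          _ ≤ (n:ℝ)*α^2/32 := by
              apply div_le_div_of_nonneg_right _ (by norm_num)
              exact mul_le_mul_of_nonneg_left hα2 (le_of_lt hn0)
      linarith
  · push_neg at hc
    refine (prodc_pair_bound n (le_of_lt hα0) hu).trans ?_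
    apply Real.exp_le_exp.2
    rw [neg_le_neg_iff]
    have hα2 : (1:ℝ)/4 ≤ α^2 := by nlinarith
    have h1 : (n:ℝ)/128 ≤ ((n/2:ℕ):ℝ)*α^2/8 := by
      have hA := mul_le_mul_of_nonneg_left hα2 (by positivity : (0:ℝ) ≤ ((n/2:ℕ):ℝ))
      nlinarith [hm, hn0]
    have h2 : u/67 ≤ (n:ℝ)/128 := by
      rw [← hucube]
      nlinarith [mul_nonneg (mul_nonneg (le_of_lt hu0) (by linarith : (0:ℝ) ≤ u - 2))
        (by linarith : (0:ℝ) ≤ u + 2)]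
    linarith

lemma tail_bound {n : ℕ} (hn : 8 ≤ n) {θ : ℝ} (hθl : (n:ℝ)^(-(5:ℝ)/4) ≤ θ) (hθu : θ ≤ π) :
    |fp n θ| ≤ Real.exp (-((n:ℝ)^((1:ℝ)/3)/67)) := by
  have hn0 : (0:ℝ) < n := by positivity
  have hθ0 : 0 < θ := lt_of_lt_of_le (by positivity) hθl
  rw [fp_eq_prodc]
  by_cases hc : 2/(n:ℝ) ≤ θ
  · apply far_bound hn
    · rw [div_le_iff₀ hn0] at hc ⊢
      linarith
    · linarith
  · push_neg at hc
    have hα1 : (n:ℝ) * (θ/2) ≤ 1 := by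
      rw [lt_div_iff₀ hn0] at hc
      nlinarith
    have hgauss := prodc_le_gauss (by linarith : (0:ℝ) ≤ θ/2) hα1
    have hnn := prodc_nonneg (by linarith : (0:ℝ) ≤ θ/2) hα1
    rw [abs_of_nonneg hnn]
    refine hgauss.trans ?_
    apply Real.exp_le_exp.2
    rw [neg_le_neg_iff]
    -- n^{1/3}/67 ≤ (θ/2)² ∑k² /4
    have hsum := sum_sq_lb n
    have hsq : ((n:ℝ)^(-(5:ℝ)/4))^2 ≤ θ^2 := by
      apply pow_le_pow_left₀ (by positivity) hθl
    have e1 : ((n:ℝ)^(-(5:ℝ)/4))^2 = (n:ℝ)^(-(5:ℝ)/2) := by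
      rw [← Real.rpow_natCast ((n:ℝ)^(-(5:ℝ)/4)) 2, ← Real.rpow_mul (le_of_lt hn0)]
      norm_num
    have e2 : (n:ℝ)^(-(5:ℝ)/2) * (n:ℝ)^3 = (n:ℝ)^((1:ℝ)/2) := by
      rw [← Real.rpow_natCast (n:ℝ) 3, ← Real.rpow_add hn0]
      norm_num
    have key : (n:ℝ)^((1:ℝ)/2)/48 ≤ (θ/2)^2 * (∑ k ∈ Finset.Icc 1 n, (k:ℝ)^2) / 4 := by
      have h1 : (n:ℝ)^(-(5:ℝ)/2) ≤ θ^2 := by rw [← e1]; exact hsq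
      have h2 : (n:ℝ)^(-(5:ℝ)/2)/4 * ((n:ℝ)^3/3) ≤ θ^2/4 * (∑ k ∈ Finset.Icc 1 n, (k:ℝ)^2) := by
        apply mul_le_mul (by linarith) hsum (by positivity) (by positivity)
      have e3 : (n:ℝ)^(-(5:ℝ)/2)/4 * ((n:ℝ)^3/3) = (n:ℝ)^((1:ℝ)/2)/12 := by
        rw [div_mul_div_comm, e2]; ring
      rw [e3] at h2
      have : (θ/2)^2 * (∑ k ∈ Finset.Icc 1 n, (k:ℝ)^2) / 4 =
          (θ^2/4 * (∑ k ∈ Finset.Icc 1 n, (k:ℝ)^2))/4 := by ring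
      rw [this]
      linarith
    refine le_trans ?_ key
    have h13 : (n:ℝ)^((1:ℝ)/3) ≤ (n:ℝ)^((1:ℝ)/2) := by
      apply Real.rpow_le_rpow_of_exponent_le (by exact_mod_cast Nat.one_le_iff_ne_zero.2 (by omega))
      norm_num
    have hp : 0 ≤ (n:ℝ)^((1:ℝ)/2) := by positivity
    calc (n:ℝ)^((1:ℝ)/3)/67 ≤ (n:ℝ)^((1:ℝ)/2)/67 := by linarith
      _ ≤ (n:ℝ)^((1:ℝ)/2)/48 := by
          apply div_le_div_of_nonneg_left hp (by norm_num) (by norm_num)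

lemma tail_integral {n : ℕ} (hn : 8 ≤ n) :
    |∫ θ in ((n:ℝ)^(-(5:ℝ)/4))..π, fp n θ| ≤ π * Real.exp (-((n:ℝ)^((1:ℝ)/3)/67)) := by
  have hn1 : (1:ℝ) ≤ n := by exact_mod_cast Nat.one_le_iff_ne_zero.2 (by omega)
  have ha1 : (n:ℝ)^(-(5:ℝ)/4) ≤ 1 := by
    apply Real.rpow_le_one_of_one_le_of_nonpos hn1
    norm_num
  have ha0 : 0 < (n:ℝ)^(-(5:ℝ)/4) := by positivity
  have haπ : (n:ℝ)^(-(5:ℝ)/4) ≤ π := le_trans ha1 (by linarith [Real.pi_gt_three])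
  have key := intervalIntegral.norm_integral_le_of_norm_le_const
    (C := Real.exp (-((n:ℝ)^((1:ℝ)/3)/67)))
    (f := fp n) (a := (n:ℝ)^(-(5:ℝ)/4)) (b := π) ?_
  · rw [Real.norm_eq_abs] at key
    refine key.trans ?_
    rw [abs_of_nonneg (by linarith)]
    have := Real.exp_nonneg (-((n:ℝ)^((1:ℝ)/3)/67))
    nlinarith [ha0]
  · intro x hx
    rw [Set.uIoc_of_le haπ] at hx
    rw [Real.norm_eq_abs]
    exact tail_bound hn (le_of_lt hx.1) hx.2

lemma pointwise_limit {t : ℝ} (ht : 0 < t) :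
    Tendsto (fun n : ℕ => fp n (t * (n:ℝ)^(-(3:ℝ)/2))) atTop
      (nhds (Real.exp (-(t^2/24)))) := by
  set A : ℕ → ℝ := fun n => (t * (n:ℝ)^(-(3:ℝ)/2))^2/8 * ∑ k ∈ Finset.Icc 1 n, (k:ℝ)^2 with hA
  set E : ℕ → ℝ := fun n => (t * (n:ℝ)^(-(3:ℝ)/2))^4/16 * ∑ k ∈ Finset.Icc 1 n, (k:ℝ)^4 with hE
  have hAeq : ∀ n : ℕ, 1 ≤ n → A n = t^2/48 * ((1+1/(n:ℝ)) * (2+1/(n:ℝ))) := by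
    intro n hn
    have hn0 : (0:ℝ) < n := by exact_mod_cast hn
    rw [hA]
    simp only
    rw [sum_Icc_sq_real]
    have hr : ((n:ℝ)^(-(3:ℝ)/2))^2 = ((n:ℝ)^3)⁻¹ := by
      rw [← Real.rpow_natCast ((n:ℝ)^(-(3:ℝ)/2)) 2, ← Real.rpow_mul (le_of_lt hn0),
        ← Real.rpow_natCast (n:ℝ) 3, ← Real.rpow_neg (le_of_lt hn0)]
      norm_num
    rw [mul_pow, hr]
    field_simp
    ring
  have hAlim : Tendsto A atTop (nhds (t^2/24)) := by
    have h1 : Tendsto (fun n : ℕ => t^2/48 * ((1+1/(n:ℝ)) * (2+1/(n:ℝ)))) atTop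
        (nhds (t^2/48 * ((1+0) * (2+0)))) := by
      apply Tendsto.const_mul
      exact (tendsto_const_nhds.add tendsto_one_div_atTop_nhds_zero_nat).mul
        (tendsto_const_nhds.add tendsto_one_div_atTop_nhds_zero_nat)
    have he : t^2/48 * ((1+0) * (2+0)) = t^2/24 := by ring
    rw [he] at h1
    apply h1.congr'
    filter_upwards [eventually_ge_atTop 1] with n hn
    exact (hAeq n hn).symm
  have hE0 : ∀ n : ℕ, 0 ≤ E n := by
    intro n
    rw [hE]
    simp only
    apply mul_nonneg (by positivity)
    exact Finset.sum_nonneg fun k _ => by positivity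
  have hEub : ∀ n : ℕ, 1 ≤ n → E n ≤ t^4/(16*n) := by
    intro n hn
    have hn0 : (0:ℝ) < n := by exact_mod_cast hn
    rw [hE]
    simp only
    have hsum : ∑ k ∈ Finset.Icc 1 n, (k:ℝ)^4 ≤ n * (n:ℝ)^4 := by
      calc ∑ k ∈ Finset.Icc 1 n, (k:ℝ)^4 ≤ ∑ _k ∈ Finset.Icc 1 n, (n:ℝ)^4 := by
            apply Finset.sum_le_sum
            intro k hk
            simp only [Finset.mem_Icc] at hk
            apply pow_le_pow_left₀ (by positivity)
            exact_mod_cast hk.2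
        _ = (Finset.Icc 1 n).card * (n:ℝ)^4 := by rw [Finset.sum_const]; ring
        _ = n * (n:ℝ)^4 := by rw [Nat.card_Icc]; norm_num
    have hr : ((n:ℝ)^(-(3:ℝ)/2))^4 = ((n:ℝ)^6)⁻¹ := by
      rw [← Real.rpow_natCast ((n:ℝ)^(-(3:ℝ)/2)) 4, ← Real.rpow_mul (le_of_lt hn0),
        ← Real.rpow_natCast (n:ℝ) 6, ← Real.rpow_neg (le_of_lt hn0)]
      norm_num
    rw [mul_pow, hr]
    have step := mul_le_mul_of_nonneg_left hsum
      (by positivity : (0:ℝ) ≤ t^4 * ((n:ℝ)^6)⁻¹ / 16)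
    have e : t^4 * ((n:ℝ)^6)⁻¹ / 16 * (n * (n:ℝ)^4) = t^4/(16*n) := by
      field_simp
    calc t^4 * ((n:ℝ)^6)⁻¹/16 * (∑ k ∈ Finset.Icc 1 n, (k:ℝ)^4)
        ≤ t^4 * ((n:ℝ)^6)⁻¹/16 * (n * (n:ℝ)^4) := step
      _ = t^4/(16*n) := e
  have hElim : Tendsto E atTop (nhds 0) := by
    apply squeeze_zero' (Filter.Eventually.of_forall hE0)
    · filter_upwards [eventually_ge_atTop 1] with n hn
      exact hEub n hn
    · have : Tendsto (fun n : ℕ => t^4/16 * (1/(n:ℝ))) atTop (nhds (t^4/16 * 0)) :=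
        Tendsto.const_mul _ tendsto_one_div_atTop_nhds_zero_nat
      rw [mul_zero] at this
      apply this.congr
      intro n
      field_simp
  -- bounds eventually
  have hbound : ∀ᶠ n : ℕ in atTop,
      Real.exp (-(A n) - E n) ≤ fp n (t * (n:ℝ)^(-(3:ℝ)/2)) ∧
      fp n (t * (n:ℝ)^(-(3:ℝ)/2)) ≤ Real.exp (-(A n) + E n) := by
    filter_upwards [eventually_ge_atTop (max 1 (Nat.ceil ((2*t)^2)))] with n hn
    have hn1 : 1 ≤ n := le_trans (le_max_left _ _) hn
    have hn0 : (0:ℝ) < n := by exact_mod_cast hn1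
    have hnt : ((2*t)^2 : ℝ) ≤ n := by
      have := le_trans (le_max_right _ _) hn
      exact le_trans (Nat.le_ceil _) (by exact_mod_cast this)
    set θ := t * (n:ℝ)^(-(3:ℝ)/2) with hθ
    have hθ0 : 0 < θ := by positivity
    -- all x_k ≤ 1/2
    have hxk : ∀ k ∈ Finset.Icc 1 n, (k:ℝ)*θ/2 ≤ 1/2 ∧ 0 ≤ (k:ℝ)*θ/2 := by
      intro k hk
      simp only [Finset.mem_Icc] at hk
      constructor
      · have h1 : (k:ℝ)*θ ≤ n*θ := by
          apply mul_le_mul_of_nonneg_right _ (le_of_lt hθ0)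
          exact_mod_cast hk.2
        have h2 : (n:ℝ)*θ ≤ 1 := by
          rw [hθ]
          have e1 : (n:ℝ) * (t * (n:ℝ)^(-(3:ℝ)/2)) = t * ((n:ℝ) * (n:ℝ)^(-(3:ℝ)/2)) := by ring
          have e2 : (n:ℝ) * (n:ℝ)^(-(3:ℝ)/2) = (n:ℝ)^(-(1:ℝ)/2) := by
            nth_rewrite 1 [← Real.rpow_one (n:ℝ)]
            rw [← Real.rpow_add hn0]
            norm_num
          rw [e1, e2]
          -- t * n^{-1/2} ≤ 1 since t ≤ √n/2... we have (2t)² ≤ n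
          have h3 : t ≤ (n:ℝ)^((1:ℝ)/2) := by
            have h4 : (t^2 : ℝ) ≤ n := by nlinarith
            have h5 := Real.rpow_le_rpow (by positivity : (0:ℝ) ≤ t^2) h4
              (by norm_num : (0:ℝ) ≤ 1/2)
            have h6 : (t^2 : ℝ)^((1:ℝ)/2) = t := by
              rw [← Real.rpow_natCast t 2, ← Real.rpow_mul (le_of_lt ht)]
              norm_num
            rwa [h6] at h5
          have h7 : (n:ℝ)^(-(1:ℝ)/2) = ((n:ℝ)^((1:ℝ)/2))⁻¹ := by
            rw [show (-(1:ℝ)/2) = -((1:ℝ)/2) by norm_num, Real.rpow_neg (le_of_lt hn0)]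
          rw [h7]
          have h8 : (0:ℝ) < (n:ℝ)^((1:ℝ)/2) := by positivity
          rw [mul_inv_le_iff₀ h8, one_mul]
          exact h3
        linarith
      · positivity
    have hAs : ∑ k ∈ Finset.Icc 1 n, ((k:ℝ)*θ/2)^2/2 = A n := by
      rw [hA]
      simp only [← hθ]
      calc ∑ k ∈ Finset.Icc 1 n, ((k:ℝ)*θ/2)^2/2
          = ∑ k ∈ Finset.Icc 1 n, (θ^2/8) * (k:ℝ)^2 :=
            Finset.sum_congr rfl (fun k _ => by ring)
        _ = θ^2/8 * ∑ k ∈ Finset.Icc 1 n, (k:ℝ)^2 := (Finset.mul_sum ..).symm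
        _ = _ := by ring
    have hEs : ∑ k ∈ Finset.Icc 1 n, ((k:ℝ)*θ/2)^4 = E n := by
      rw [hE]
      simp only [← hθ]
      calc ∑ k ∈ Finset.Icc 1 n, ((k:ℝ)*θ/2)^4
          = ∑ k ∈ Finset.Icc 1 n, (θ^4/16) * (k:ℝ)^4 :=
            Finset.sum_congr rfl (fun k _ => by ring)
        _ = θ^4/16 * ∑ k ∈ Finset.Icc 1 n, (k:ℝ)^4 := (Finset.mul_sum ..).symm
        _ = _ := by ring
    have hup : fp n θ ≤ Real.exp (-(A n) + E n) := by
      unfold fp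
      calc ∏ k ∈ Finset.Icc 1 n, Real.cos ((k:ℝ)*θ/2)
          ≤ ∏ k ∈ Finset.Icc 1 n, Real.exp (-(((k:ℝ)*θ/2)^2/2) + ((k:ℝ)*θ/2)^4) := by
            apply Finset.prod_le_prod
            · intro k hk
              obtain ⟨h1, h2⟩ := hxk k hk
              exact cos_nonneg_of_le_one h2 (by linarith)
            · intro k hk
              obtain ⟨h1, h2⟩ := hxk k hk
              exact cos_le_exp' h2 (by linarith)
        _ = Real.exp (∑ k ∈ Finset.Icc 1 n, (-(((k:ℝ)*θ/2)^2/2) + ((k:ℝ)*θ/2)^4)) :=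
            (Real.exp_sum _ _).symm
        _ = Real.exp (-(A n) + E n) := by
            congr 1
            rw [Finset.sum_add_distrib, Finset.sum_neg_distrib, hAs, hEs]
    have hlo : Real.exp (-(A n) - E n) ≤ fp n θ := by
      unfold fp
      calc Real.exp (-(A n) - E n)
          = Real.exp (∑ k ∈ Finset.Icc 1 n, (-(((k:ℝ)*θ/2)^2/2) - ((k:ℝ)*θ/2)^4)) := by
            congr 1
            rw [Finset.sum_sub_distrib, Finset.sum_neg_distrib, hAs, hEs]
        _ = ∏ k ∈ Finset.Icc 1 n, Real.exp (-(((k:ℝ)*θ/2)^2/2) - ((k:ℝ)*θ/2)^4) :=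
            Real.exp_sum _ _
        _ ≤ ∏ k ∈ Finset.Icc 1 n, Real.cos ((k:ℝ)*θ/2) := by
            apply Finset.prod_le_prod
            · intro k _; positivity
            · intro k hk
              obtain ⟨h1, h2⟩ := hxk k hk
              exact exp_le_cos h2 h1
    exact ⟨hlo, hup⟩
  have hlower : Tendsto (fun n => Real.exp (-(A n) - E n)) atTop (nhds (Real.exp (-(t^2/24)))) := by
    have : Tendsto (fun n => -(A n) - E n) atTop (nhds (-(t^2/24) - 0)) :=
      (hAlim.neg).sub hElim
    rw [sub_zero] at this
    exact (Real.continuous_exp.tendsto _).comp this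
  have hupper : Tendsto (fun n => Real.exp (-(A n) + E n)) atTop (nhds (Real.exp (-(t^2/24)))) := by
    have : Tendsto (fun n => -(A n) + E n) atTop (nhds (-(t^2/24) + 0)) :=
      (hAlim.neg).add hElim
    rw [add_zero] at this
    exact (Real.continuous_exp.tendsto _).comp this
  exact tendsto_of_tendsto_of_tendsto_of_le_of_le' hlower hupper
    (hbound.mono fun n h => h.1) (hbound.mono fun n h => h.2)

noncomputable def G (n : ℕ) (t : ℝ) : ℝ :=
  (Set.Ioc (0:ℝ) ((n:ℝ)^((1:ℝ)/4))).indicator (fun t => fp n (t * (n:ℝ)^(-(3:ℝ)/2))) t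

noncomputable def glim (t : ℝ) : ℝ :=
  (Set.Ioi (0:ℝ)).indicator (fun t => Real.exp (-(1/24) * t^2)) t

lemma glim_integral : ∫ t, glim t = Real.sqrt (6*π) := by
  unfold glim
  rw [MeasureTheory.integral_indicator measurableSet_Ioi]
  rw [integral_gaussian_Ioi (1/24)]
  rw [show π/(1/24) = 4*(6*π) by ring]
  rw [show (4:ℝ)*(6*π) = 2^2*(6*π) by norm_num]
  rw [Real.sqrt_mul (by norm_num) (6*π), Real.sqrt_sq (by norm_num : (0:ℝ) ≤ 2)]
  ring

lemma G_meas (n : ℕ) : MeasureTheory.AEStronglyMeasurable (G n) MeasureTheory.volume := by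
  unfold G
  apply MeasureTheory.AEStronglyMeasurable.indicator _ measurableSet_Ioc
  exact ((fp_cont n).comp (continuous_id.mul continuous_const)).aestronglyMeasurable

lemma G_bound {n : ℕ} (hn : 1 ≤ n) (t : ℝ) :
    |G n t| ≤ (Set.Ioi (0:ℝ)).indicator (fun t => Real.exp (-(1/48) * t^2)) t := by
  have hn0 : (0:ℝ) < n := by exact_mod_cast hn
  unfold G
  by_cases ht : t ∈ Set.Ioc (0:ℝ) ((n:ℝ)^((1:ℝ)/4))
  · rw [Set.indicator_of_mem ht]
    have ht0 : 0 < t := ht.1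
    rw [Set.indicator_of_mem (Set.mem_Ioi.2 ht0)]
    set θ := t * (n:ℝ)^(-(3:ℝ)/2) with hθ
    have hθ0 : 0 < θ := by positivity
    have hα1 : (n:ℝ) * (θ/2) ≤ 1 := by
      have e2 : (n:ℝ) * (n:ℝ)^(-(3:ℝ)/2) = (n:ℝ)^(-(1:ℝ)/2) := by
        nth_rewrite 1 [← Real.rpow_one (n:ℝ)]
        rw [← Real.rpow_add hn0]
        norm_num
      have h1 : (n:ℝ)*θ = t * (n:ℝ)^(-(1:ℝ)/2) := by rw [hθ]; rw [← e2]; ring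
      have h2 : t * (n:ℝ)^(-(1:ℝ)/2) ≤ (n:ℝ)^((1:ℝ)/4) * (n:ℝ)^(-(1:ℝ)/2) := by
        apply mul_le_mul_of_nonneg_right ht.2 (by positivity)
      have h3 : (n:ℝ)^((1:ℝ)/4) * (n:ℝ)^(-(1:ℝ)/2) = (n:ℝ)^(-(1:ℝ)/4) := by
        rw [← Real.rpow_add hn0]; norm_num
      have h4 : (n:ℝ)^(-(1:ℝ)/4) ≤ 1 := by
        apply Real.rpow_le_one_of_one_le_of_nonpos (by exact_mod_cast hn)
        norm_num
      have : (n:ℝ)*θ ≤ 1 := by rw [h1]; rw [h3] at h2; linarith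
      linarith
    have hnn := prodc_nonneg (by linarith : (0:ℝ) ≤ θ/2) hα1
    rw [fp_eq_prodc, abs_of_nonneg hnn]
    refine (prodc_le_gauss (by linarith) hα1).trans ?_
    apply Real.exp_le_exp.2
    rw [show -(1/48:ℝ)*t^2 = -(1/48*t^2) by ring, neg_le_neg_iff]
    have hsum := sum_sq_lb n
    have hr : ((n:ℝ)^(-(3:ℝ)/2))^2 = ((n:ℝ)^3)⁻¹ := by
      rw [← Real.rpow_natCast ((n:ℝ)^(-(3:ℝ)/2)) 2, ← Real.rpow_mul (le_of_lt hn0),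
        ← Real.rpow_natCast (n:ℝ) 3, ← Real.rpow_neg (le_of_lt hn0)]
      norm_num
    have hθ2 : θ^2 = t^2 * ((n:ℝ)^3)⁻¹ := by
      rw [hθ, mul_pow, hr]
    have step : t^2 * ((n:ℝ)^3)⁻¹/16 * ((n:ℝ)^3/3) ≤ θ^2/16 * (∑ k ∈ Finset.Icc 1 n, (k:ℝ)^2) := by
      apply mul_le_mul (le_of_eq (by rw [hθ2])) hsum (by positivity) (by positivity)
    have e : t^2 * ((n:ℝ)^3)⁻¹/16 * ((n:ℝ)^3/3) = t^2/48 := by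
      field_simp
      ring
    have e2 : (θ/2)^2 * (∑ k ∈ Finset.Icc 1 n, (k:ℝ)^2) / 4 =
        θ^2/16 * (∑ k ∈ Finset.Icc 1 n, (k:ℝ)^2) := by ring
    rw [e2, show (1:ℝ)/48*t^2 = t^2/48 by ring]
    rw [e] at step
    exact step
  · rw [Set.indicator_of_notMem ht]
    simp only [abs_zero]
    apply Set.indicator_nonneg
    intro a _
    positivity

lemma G_pointwise (t : ℝ) : Tendsto (fun n => G n t) atTop (nhds (glim t)) := by
  by_cases ht : 0 < t
  · have hev : ∀ᶠ n : ℕ in atTop, G n t = fp n (t * (n:ℝ)^(-(3:ℝ)/2)) := by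
      have h14 : Tendsto (fun n : ℕ => (n:ℝ)^((1:ℝ)/4)) atTop atTop :=
        (tendsto_rpow_atTop (by norm_num)).comp tendsto_natCast_atTop_atTop
      filter_upwards [h14.eventually_ge_atTop t] with n hn
      unfold G
      rw [Set.indicator_of_mem (Set.mem_Ioc.2 ⟨ht, hn⟩)]
    have hg : glim t = Real.exp (-(t^2/24)) := by
      unfold glim
      rw [Set.indicator_of_mem (Set.mem_Ioi.2 ht)]
      congr 1
      ring
    rw [hg]
    apply (pointwise_limit ht).congr'
    filter_upwards [hev] with n h
    exact h.symm
  · push_neg at ht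
    have h1 : ∀ n : ℕ, G n t = 0 := by
      intro n
      unfold G
      apply Set.indicator_of_notMem
      intro hmem
      exact absurd hmem.1 (not_lt.2 ht)
    have h2 : glim t = 0 := by
      unfold glim
      apply Set.indicator_of_notMem
      simp only [Set.mem_Ioi]
      exact not_lt.2 ht
    rw [h2]
    simp only [h1]
    exact tendsto_const_nhds

lemma central_tendsto : Tendsto (fun n => ∫ t, G n t) atTop (nhds (Real.sqrt (6*π))) := by
  rw [← glim_integral]
  apply MeasureTheory.tendsto_integral_filter_of_dominated_convergence
    ((Set.Ioi (0:ℝ)).indicator (fun t => Real.exp (-(1/48) * t^2)))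
  · exact Filter.Eventually.of_forall fun n => G_meas n
  · filter_upwards [eventually_ge_atTop 1] with n hn
    apply MeasureTheory.ae_of_all
    intro t
    rw [Real.norm_eq_abs]
    exact G_bound hn t
  · exact (integrable_exp_neg_mul_sq (by norm_num : (0:ℝ) < 1/48)).indicator measurableSet_Ioi
  · exact MeasureTheory.ae_of_all _ G_pointwise

lemma G_integral_eq {n : ℕ} (hn : 1 ≤ n) :
    ∫ t, G n t = (n:ℝ)^((3:ℝ)/2) * ∫ θ in (0:ℝ)..((n:ℝ)^(-(5:ℝ)/4)), fp n θ := by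
  have hn0 : (0:ℝ) < n := by exact_mod_cast hn
  have h14 : (0:ℝ) ≤ (n:ℝ)^((1:ℝ)/4) := by positivity
  unfold G
  rw [MeasureTheory.integral_indicator measurableSet_Ioc]
  rw [← intervalIntegral.integral_of_le h14]
  have hc : ((n:ℝ)^(-(3:ℝ)/2)) ≠ 0 := by positivity
  rw [intervalIntegral.integral_comp_mul_right (fun θ => fp n θ) hc]
  rw [zero_mul]
  have e1 : (n:ℝ)^((1:ℝ)/4) * (n:ℝ)^(-(3:ℝ)/2) = (n:ℝ)^(-(5:ℝ)/4) := by
    rw [← Real.rpow_add hn0]; norm_num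
  have e2 : ((n:ℝ)^(-(3:ℝ)/2))⁻¹ = (n:ℝ)^((3:ℝ)/2) := by
    rw [show (-(3:ℝ)/2) = -((3:ℝ)/2) by norm_num, Real.rpow_neg (le_of_lt hn0), inv_inv]
  rw [e1, e2, smul_eq_mul]

lemma decay_tendsto : Tendsto
    (fun n : ℕ => (n:ℝ)^((3:ℝ)/2) * (π * Real.exp (-((n:ℝ)^((1:ℝ)/3)/67)))) atTop (nhds 0) := by
  have base : Tendsto (fun x : ℝ => π * 67^5 * ((x/67)^5 * Real.exp (-(x/67)))) atTop (nhds 0) := by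
    have h1 : Tendsto (fun y : ℝ => y^5 * Real.exp (-y)) atTop (nhds 0) :=
      tendsto_pow_mul_exp_neg_atTop_nhds_zero 5
    have h2 : Tendsto (fun x : ℝ => x/67) atTop atTop :=
      tendsto_id.atTop_div_const (by norm_num)
    have h3 := (h1.comp h2).const_mul (π * 67^5)
    rw [mul_zero] at h3
    exact h3
  have comp : Tendsto (fun n : ℕ =>
      π * 67^5 * ((((n:ℝ)^((1:ℝ)/3))/67)^5 * Real.exp (-(((n:ℝ)^((1:ℝ)/3))/67)))) atTop (nhds 0) := by
    apply base.comp
    exact (tendsto_rpow_atTop (by norm_num)).comp tendsto_natCast_atTop_atTop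
  apply squeeze_zero_norm' _ comp
  filter_upwards [eventually_ge_atTop 1] with n hn
  have hn0 : (0:ℝ) < n := by exact_mod_cast hn
  have hn1 : (1:ℝ) ≤ n := by exact_mod_cast hn
  set u := (n:ℝ)^((1:ℝ)/3) with hu
  have hu1 : 1 ≤ u := Real.one_le_rpow hn1 (by norm_num)
  have hkey : (n:ℝ)^((3:ℝ)/2) ≤ u^5 := by
    have h1 : (n:ℝ)^((3:ℝ)/2) ≤ (n:ℝ)^((5:ℝ)/3) :=
      Real.rpow_le_rpow_of_exponent_le hn1 (by norm_num)
    have h2 : (n:ℝ)^((5:ℝ)/3) = u^5 := by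
      rw [hu, ← Real.rpow_natCast ((n:ℝ)^((1:ℝ)/3)) 5, ← Real.rpow_mul (le_of_lt hn0)]
      norm_num
    linarith
  rw [Real.norm_eq_abs, abs_of_nonneg (by positivity)]
  have hexp : (0:ℝ) ≤ Real.exp (-(u/67)) := Real.exp_nonneg _
  calc (n:ℝ)^((3:ℝ)/2) * (π * Real.exp (-(u/67)))
      ≤ u^5 * (π * Real.exp (-(u/67))) := by
        apply mul_le_mul_of_nonneg_right hkey (by positivity)
    _ = π * 67^5 * ((u/67)^5 * Real.exp (-(u/67))) := by ring

lemma main_integral :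
    Tendsto (fun n : ℕ => (n:ℝ)^((3:ℝ)/2) * ∫ θ in (0:ℝ)..π, fp n θ) atTop
      (nhds (Real.sqrt (6*π))) := by
  have split : ∀ᶠ n : ℕ in atTop, (n:ℝ)^((3:ℝ)/2) * ∫ θ in (0:ℝ)..π, fp n θ
      = (∫ t, G n t) + (n:ℝ)^((3:ℝ)/2) * ∫ θ in ((n:ℝ)^(-(5:ℝ)/4))..π, fp n θ := by
    filter_upwards [eventually_ge_atTop 1] with n hn
    have hadd := intervalIntegral.integral_add_adjacent_intervals
      (a := (0:ℝ)) (b := (n:ℝ)^(-(5:ℝ)/4)) (c := π) (f := fp n) (μ := MeasureTheory.volume)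
      ((fp_cont n).intervalIntegrable _ _) ((fp_cont n).intervalIntegrable _ _)
    rw [G_integral_eq hn, ← hadd]
    ring
  have h2 : Tendsto (fun n : ℕ =>
      (n:ℝ)^((3:ℝ)/2) * ∫ θ in ((n:ℝ)^(-(5:ℝ)/4))..π, fp n θ) atTop (nhds 0) := by
    apply squeeze_zero_norm' _ decay_tendsto
    filter_upwards [eventually_ge_atTop 8] with n hn
    rw [Real.norm_eq_abs, abs_mul, abs_of_nonneg (by positivity : (0:ℝ) ≤ (n:ℝ)^((3:ℝ)/2))]
    exact mul_le_mul_of_nonneg_left (tail_integral hn) (by positivity)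
  have hsum := central_tendsto.add h2
  rw [add_zero] at hsum
  apply hsum.congr'
  filter_upwards [split] with n h
  exact h.symm

lemma sum_Icc_id_real (n : ℕ) : ∑ k ∈ Finset.Icc 1 n, (k:ℝ) = n*(n+1)/2 := by
  induction n with
  | zero => simp
  | succ m ih =>
    rw [Finset.sum_Icc_succ_top (by omega), ih]
    push_cast; ring

lemma integral_exp_int (m : ℤ) (hm : m ≠ 0) :
    ∫ θ in (0:ℝ)..(2*π), Complex.exp ((m * Complex.I) * θ) = 0 := by
  rw [integral_exp_mul_complex (by simp [Complex.ext_iff, hm])]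
  have h1 : Complex.exp (m * Complex.I * (2*π)) = 1 := by
    rw [show (m:ℂ) * Complex.I * (2*π) = m * (2*π*Complex.I) by push_cast; ring]
    exact Complex.exp_int_mul_two_pi_mul_I m
  simp [h1]

lemma coeff_formula (Q : Polynomial ℂ) (N : ℕ) :
    ∫ θ in (0:ℝ)..(2*π),
      Q.eval (Complex.exp (θ * Complex.I)) * Complex.exp (-((N:ℂ) * Complex.I) * θ)
      = 2 * π * Q.coeff N := by
  have key : ∀ θ : ℝ, Q.eval (Complex.exp (θ * Complex.I)) * Complex.exp (-((N:ℂ) * Complex.I) * θ)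
      = ∑ i ∈ Finset.range (Q.natDegree + 1),
          Q.coeff i * Complex.exp (((i - (N:ℤ) : ℤ) * Complex.I) * θ) := by
    intro θ
    rw [Polynomial.eval_eq_sum_range, Finset.sum_mul]
    refine Finset.sum_congr rfl fun i _ => ?_
    rw [mul_assoc, ← Complex.exp_nat_mul, ← Complex.exp_add]
    congr 1
    push_cast
    ring
  simp_rw [key]
  rw [intervalIntegral.integral_finset_sum]
  · have : ∀ i ∈ Finset.range (Q.natDegree + 1),
        (∫ θ in (0:ℝ)..(2*π), Q.coeff i * Complex.exp (((i - (N:ℤ) : ℤ) * Complex.I) * θ))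
          = if i = N then 2 * π * Q.coeff N else 0 := by
      intro i _
      rw [intervalIntegral.integral_const_mul]
      by_cases h : i = N
      · subst h
        simp only [sub_self, if_pos rfl]
        simp [Complex.ofReal_mul]
        ring
      · rw [integral_exp_int _ (by omega : ((i:ℤ) - N) ≠ 0)]
        simp [h]
    rw [Finset.sum_congr rfl this, Finset.sum_ite_eq' (Finset.range (Q.natDegree + 1)) N]
    by_cases hN : N ∈ Finset.range (Q.natDegree + 1)
    · simp [hN]
    · simp only [hN, if_neg]
      rw [Polynomial.coeff_eq_zero_of_natDegree_lt (by simpa using hN)]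
      simp
  · intro i _
    have hc : Continuous fun θ : ℝ => Q.coeff i * Complex.exp (((i - (N:ℤ) : ℤ) * Complex.I) * θ) := by
      continuity
    exact hc.intervalIntegrable _ _

lemma one_add_exp (φ : ℝ) :
    1 + Complex.exp (φ * Complex.I) =
      2 * (Real.cos (φ/2) : ℂ) * Complex.exp ((φ/2 : ℝ) * Complex.I) := by
  rw [Complex.ofReal_cos, Complex.cos]
  set x : ℂ := ((φ/2 : ℝ) : ℂ) with hx
  have hxx : x + x = (φ : ℂ) := by rw [hx]; push_cast; ring
  have h : 2 * ((Complex.exp (x * Complex.I) + Complex.exp (-x * Complex.I)) / 2)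
        * Complex.exp (x * Complex.I)
      = Complex.exp (x * Complex.I) * Complex.exp (x * Complex.I)
        + Complex.exp (-x * Complex.I) * Complex.exp (x * Complex.I) := by ring
  rw [h, ← Complex.exp_add, ← Complex.exp_add,
    show x * Complex.I + x * Complex.I = (x + x) * Complex.I by ring,
    show -x * Complex.I + x * Complex.I = 0 by ring, Complex.exp_zero, hxx]
  ring

lemma eval_P (n N : ℕ) (hN : n*(n+1) = 4*N) (θ : ℝ) :
    (((∏ k ∈ Finset.Icc 1 n, ((1 : Polynomial ℤ) + Polynomial.X ^ k)).map
        (Int.castRingHom ℂ)).eval (Complex.exp (θ * Complex.I)))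
      * Complex.exp (-((N:ℂ) * Complex.I) * θ)
      = (2:ℂ)^n * (fp n θ : ℝ) := by
  rw [Polynomial.map_prod]
  simp only [Polynomial.map_add, Polynomial.map_one, Polynomial.map_pow, Polynomial.map_X]
  rw [Polynomial.eval_prod]
  simp only [Polynomial.eval_add, Polynomial.eval_one, Polynomial.eval_pow, Polynomial.eval_X]
  have step1 : ∀ k ∈ Finset.Icc 1 n,
      1 + Complex.exp (θ * Complex.I) ^ k
        = 2 * (Real.cos (k*θ/2) : ℂ) * Complex.exp (((k*θ/2 : ℝ)) * Complex.I) := by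
    intro k _
    rw [← Complex.exp_nat_mul]
    have h1 := one_add_exp (k*θ)
    rw [show ((k:ℂ) * (θ * Complex.I)) = ((k*θ : ℝ) : ℂ) * Complex.I by push_cast; ring]
    rw [h1]
  rw [Finset.prod_congr rfl step1]
  simp only [Finset.prod_mul_distrib]
  rw [Finset.prod_const, ← Complex.exp_sum]
  have h4 : ((n:ℝ)*((n:ℝ)+1)) = 4*(N:ℝ) := by exact_mod_cast hN
  have hsr : ∑ k ∈ Finset.Icc 1 n, ((k:ℝ)*θ/2) = (N:ℝ)*θ := by
    simp_rw [mul_div_assoc]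
    rw [← Finset.sum_mul, sum_Icc_id_real]
    rw [div_mul_eq_mul_div]
    linear_combination (θ/4) * h4
  have hsum : ∑ k ∈ Finset.Icc 1 n, ((k*θ/2 : ℝ) : ℂ) * Complex.I
      = ((N:ℝ)*θ : ℝ) * Complex.I := by
    rw [← Finset.sum_mul, ← Complex.ofReal_sum, hsr]
  rw [hsum]
  rw [mul_assoc, mul_assoc, ← Complex.exp_add,
    show (((N:ℝ)*θ : ℝ) : ℂ) * Complex.I + -((N:ℂ) * Complex.I) * θ = 0 by push_cast; ring,
    Complex.exp_zero]
  have hprodcos : (∏ k ∈ Finset.Icc 1 n, ((Real.cos ((k:ℝ)*θ/2) : ℝ) : ℂ)) = ((fp n θ : ℝ) : ℂ) := by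
    unfold fp; push_cast; rfl
  rw [hprodcos]
  simp [Nat.card_Icc]

lemma coeff_eq (n N : ℕ) (hN : n*(n+1) = 4*N) :
    ((∏ k ∈ Finset.Icc 1 n, ((1 : Polynomial ℤ) + Polynomial.X ^ k)).coeff N : ℝ) * (2*π)
      = 2^n * ∫ θ in (0:ℝ)..(2*π), fp n θ := by
  set P := ∏ k ∈ Finset.Icc 1 n, ((1 : Polynomial ℤ) + Polynomial.X ^ k) with hP
  set Q := P.map (Int.castRingHom ℂ) with hQ
  have h1 := coeff_formula Q N
  have h2 : ∀ θ : ℝ, Q.eval (Complex.exp (θ * Complex.I)) * Complex.exp (-((N:ℂ) * Complex.I) * θ)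
      = (2:ℂ)^n * ((fp n θ : ℝ) : ℂ) := fun θ => eval_P n N hN θ
  rw [intervalIntegral.integral_congr (fun θ _ => h2 θ)] at h1
  rw [intervalIntegral.integral_const_mul, intervalIntegral.integral_ofReal] at h1
  have h3 : Q.coeff N = ((P.coeff N : ℤ) : ℂ) := by
    rw [hQ, Polynomial.coeff_map]; simp
  rw [h3] at h1
  have : ((2:ℂ)^n * ((∫ θ in (0:ℝ)..(2*π), fp n θ : ℝ) : ℂ)) =
      (((2:ℝ)^n * ∫ θ in (0:ℝ)..(2*π), fp n θ : ℝ) : ℂ) := by push_cast; ring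
  rw [this] at h1
  have h4 : ((2:ℂ) * (π:ℝ) * ((P.coeff N : ℤ) : ℂ)) =
      (((P.coeff N : ℤ) : ℝ) * (2*π) : ℝ) := by push_cast; ring
  rw [h4] at h1
  exact_mod_cast h1.symm

lemma sum_Icc_id_mul_two (n : ℕ) : (∑ k ∈ Finset.Icc 1 n, k) * 2 = n*(n+1) := by
  induction n with
  | zero => simp
  | succ m ih => rw [Finset.sum_Icc_succ_top (by omega), add_mul, ih]; ring

lemma fp_periodic (n N : ℕ) (hN : n*(n+1) = 4*N) : Function.Periodic (fp n) (2*π) := by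
  intro θ
  unfold fp
  have key : ∀ k ∈ Finset.Icc 1 n, Real.cos ((k:ℝ) * (θ + 2*π) / 2)
      = (-1:ℝ)^k * Real.cos ((k:ℝ)*θ/2) := by
    intro k _
    have h1 : (k:ℝ) * (θ + 2*π) / 2 = (k:ℝ)*π - (-((k:ℝ)*θ/2)) := by ring
    rw [h1, Real.cos_nat_mul_pi_sub, Real.cos_neg]
  rw [Finset.prod_congr rfl key, Finset.prod_mul_distrib, Finset.prod_pow_eq_pow_sum]
  have hs : ∑ k ∈ Finset.Icc 1 n, k = 2*N := by
    have := sum_Icc_id_mul_two n; omega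
  rw [hs, pow_mul]
  norm_num

lemma fp_even (n : ℕ) (θ : ℝ) : fp n (-θ) = fp n θ := by
  unfold fp
  refine Finset.prod_congr rfl fun k _ => ?_
  rw [show (k:ℝ) * -θ / 2 = -((k:ℝ)*θ/2) by ring, Real.cos_neg]

lemma fold (n N : ℕ) (hN : n*(n+1) = 4*N) :
    ∫ θ in (0:ℝ)..(2*π), fp n θ = 2 * ∫ θ in (0:ℝ)..π, fp n θ := by
  have h1 : ∫ θ in (0:ℝ)..(2*π), fp n θ = ∫ θ in (-π)..(-π + 2*π), fp n θ := by
    have := (fp_periodic n N hN).intervalIntegral_add_eq 0 (-π)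
    rw [zero_add] at this
    exact this
  have h2 : (-π + 2*π : ℝ) = π := by ring
  rw [h1, h2]
  have h3 : ∫ θ in (-π:ℝ)..π, fp n θ =
      (∫ θ in (-π:ℝ)..0, fp n θ) + ∫ θ in (0:ℝ)..π, fp n θ :=
    (intervalIntegral.integral_add_adjacent_intervals
      ((fp_cont n).intervalIntegrable _ _) ((fp_cont n).intervalIntegrable _ _)).symm
  have h4 : ∫ θ in (-π:ℝ)..0, fp n θ = ∫ θ in (0:ℝ)..π, fp n θ := by
    have := intervalIntegral.integral_comp_neg (a := 0) (b := π) (fun θ => fp n θ)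
    simp only [neg_zero] at this
    rw [← this]
    refine intervalIntegral.integral_congr fun θ _ => ?_
    exact fp_even n θ
  rw [h3, h4]; ring

lemma sqrt_six_pi_pos : 0 < Real.sqrt (6*π) :=
  Real.sqrt_pos.2 (by positivity)

lemma sqrt_div_mul_pi : Real.sqrt (6/π) * π = Real.sqrt (6*π) := by
  have hπ : (0:ℝ) < π := Real.pi_pos
  have h1 : (Real.sqrt (6/π) * π)^2 = 6*π := by
    rw [mul_pow, Real.sq_sqrt (by positivity : (0:ℝ) ≤ 6/π)]
    field_simp
  rw [← h1, Real.sqrt_sq (by positivity)]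

theorem stmt_17 :
    Tendsto (fun n : ℕ =>
        ((∏ k ∈ Finset.Icc 1 n, ((1 : Polynomial ℤ) + Polynomial.X ^ k)).coeff
            (n * (n + 1) / 4) : ℝ) /
          (Real.sqrt (6 / π) * 2 ^ n * (n : ℝ) ^ (-(3 : ℝ) / 2)))
      (atTop ⊓ Filter.principal {n : ℕ | n % 4 = 0 ∨ n % 4 = 3}) (nhds 1) := by
  set L := atTop ⊓ Filter.principal {n : ℕ | n % 4 = 0 ∨ n % 4 = 3} with hL
  have key : Tendsto (fun n : ℕ =>
      ((n:ℝ)^((3:ℝ)/2) * ∫ θ in (0:ℝ)..π, fp n θ) / Real.sqrt (6*π)) atTop (nhds 1) := by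
    have h := main_integral.div_const (Real.sqrt (6*π))
    rwa [div_self (ne_of_gt sqrt_six_pi_pos)] at h
  have key' : Tendsto (fun n : ℕ =>
      ((n:ℝ)^((3:ℝ)/2) * ∫ θ in (0:ℝ)..π, fp n θ) / Real.sqrt (6*π)) L (nhds 1) :=
    key.mono_left inf_le_left
  apply key'.congr'
  have hS : ∀ᶠ n : ℕ in L, n % 4 = 0 ∨ n % 4 = 3 := by
    rw [hL]
    exact (Filter.le_principal_iff.1 inf_le_right :)
  have h1 : ∀ᶠ n : ℕ in L, 1 ≤ n := (eventually_ge_atTop 1).filter_mono inf_le_left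
  filter_upwards [hS, h1] with n hnS hn1
  -- divisibility
  have hdvd : 4 ∣ n*(n+1) := by
    rcases hnS with h | h
    · obtain ⟨k, rfl⟩ : ∃ k, n = 4*k := ⟨n/4, by omega⟩
      exact ⟨k*(4*k+1), by ring⟩
    · obtain ⟨k, rfl⟩ : ∃ k, n = 4*k+3 := ⟨n/4, by omega⟩
      exact ⟨(4*k+3)*(k+1), by ring⟩
  set N := n*(n+1)/4 with hNdef
  have hN : n*(n+1) = 4*N := (Nat.mul_div_cancel' hdvd).symm
  have hc := coeff_eq n N hN
  rw [fold n N hN] at hc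
  set c : ℝ := ((∏ k ∈ Finset.Icc 1 n, ((1 : Polynomial ℤ) + Polynomial.X ^ k)).coeff N : ℝ)
    with hcdef
  set I : ℝ := ∫ θ in (0:ℝ)..π, fp n θ with hI
  -- hc : c * (2*π) = 2^n * (2*I)
  have hπ : (0:ℝ) < π := Real.pi_pos
  have hcI : c = 2^n * I / π := by
    field_simp
    linarith [hc]
  have hn0 : (0:ℝ) < n := by exact_mod_cast hn1
  have hrp : (n:ℝ)^(-(3:ℝ)/2) = ((n:ℝ)^((3:ℝ)/2))⁻¹ := by
    rw [show (-(3:ℝ)/2) = -((3:ℝ)/2) by norm_num, Real.rpow_neg hn0.le]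
  have h32 : (0:ℝ) < (n:ℝ)^((3:ℝ)/2) := by positivity
  have hsq : (0:ℝ) < Real.sqrt (6/π) := Real.sqrt_pos.2 (by positivity)
  have h2n : (0:ℝ) < 2^n := by positivity
  show ((n:ℝ)^((3:ℝ)/2) * I) / Real.sqrt (6*π) = c / (Real.sqrt (6/π) * 2^n * (n:ℝ)^(-(3:ℝ)/2))
  rw [hcI, hrp, ← sqrt_div_mul_pi]
  field_simp
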